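/- arXiv:0804.0865 — 4 statements merged into one kernel-verified Lean document; each statement's English description precedes it below -/
import Mathlib

section
/- Let γ = (1+√5)/2 and E = {α ∈ ℤ[γ] : α ≥ 0}. Then every α ∈ E can be written as α = γ^(-i₁) + ⋯ + γ^(-iₛ) for some s ≥ 0 and integers 0 ≤ i₁ ≤ ⋯ ≤ iₛ (the empty sum representing 0). -/
private lemma shift_sum (γ : ℝ) (hγ0 : γ ≠ 0) (l : List ℕ) :
    ((l.map (fun i => i + 1)).map (fun i : ℕ => γ ^ (-(i : ℤ)))).sum
      = γ⁻¹ * (l.map (fun i : ℕ => γ ^ (-(i : ℤ)))).sum := by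
  induction l with
  | nil => simp
  | cons x xs ih =>
      simp only [List.map_cons, List.sum_cons, ih]
      push_cast
      rw [show (-((x:ℤ) + 1) : ℤ) = -(x:ℤ) + (-1) by ring, zpow_add₀ hγ0, zpow_neg_one]
      ring

private lemma rep_sum (γ : ℝ) (hγ0 : 0 < γ) (a b : ℤ) (ha : 0 ≤ a) (hb : 0 ≤ b)
    (j : ℕ) :
    (((List.replicate a.toNat j ++ List.replicate b.toNat (j+1)).map
      (fun i : ℕ => γ ^ (-(i : ℤ)))).sum)
      = a * γ ^ (-(j:ℤ)) + b * γ ^ (-((j:ℤ)+1)) := by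
  rw [List.map_append, List.sum_append, List.map_replicate, List.map_replicate,
    List.sum_replicate, List.sum_replicate, nsmul_eq_mul, nsmul_eq_mul]
  have ea : ((a.toNat : ℕ) : ℝ) = a := by exact_mod_cast Int.toNat_of_nonneg ha
  have eb : ((b.toNat : ℕ) : ℝ) = b := by exact_mod_cast Int.toNat_of_nonneg hb
  rw [ea, eb]
  push_cast
  ring_nf

private lemma key (γ : ℝ) (hγ : γ = (1 + Real.sqrt 5) / 2) :
    ∀ N : ℕ, ∀ a b : ℤ, a.natAbs + b.natAbs ≤ N → (0:ℝ) ≤ a + b / γ →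
      ∃ l : List ℕ, (a:ℝ) + b / γ = (l.map (fun i : ℕ => γ ^ (-(i : ℤ)))).sum := by
  have h5 : Real.sqrt 5 ^ 2 = 5 := Real.sq_sqrt (by norm_num)
  have h0 : 0 ≤ Real.sqrt 5 := Real.sqrt_nonneg 5
  have hsq : γ ^ 2 = γ + 1 := by nlinarith
  have hγ1 : 1 < γ := by nlinarith
  have hγ2 : γ < 2 := by nlinarith
  have hγ0 : 0 < γ := by linarith
  have hne : γ ≠ 0 := ne_of_gt hγ0
  have hinv : γ⁻¹ = γ - 1 := by
    field_simp; nlinarith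
  intro N
  induction N with
  | zero =>
      intro a b hab _
      have ha : a = 0 := by omega
      have hb : b = 0 := by omega
      exact ⟨[], by simp [ha, hb]⟩
  | succ N ih =>
      intro a b hab hpos
      by_cases hcase : 0 ≤ a ∧ 0 ≤ b
      · refine ⟨List.replicate a.toNat 0 ++ List.replicate b.toNat 1, ?_⟩
        rw [rep_sum γ hγ0 a b hcase.1 hcase.2 0]
        have e0 : γ ^ (-(((0:ℕ):ℤ))) = 1 := by norm_num
        have e1 : γ ^ (-(((0:ℕ):ℤ))+(-1)) = γ⁻¹ := by norm_num
        rw [show -(((0:ℕ):ℤ)+1) = -(((0:ℕ):ℤ)) + (-1) by ring, e0, e1]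
        rw [div_eq_mul_inv]; ring
      · -- the identity: a + b/γ = (a+b)/γ + a/γ²  i.e. = γ⁻¹ * ((a+b) + a/γ)
        have hiden : (a:ℝ) + b / γ = γ⁻¹ * (((a:ℝ) + b) + a / γ) := by
          field_simp
          linear_combination (a:ℝ) * hsq
        by_cases hcase2 : 0 ≤ a ∧ 0 ≤ a + b
        · -- direct: (a+b) copies of 1, a copies of 2
          refine ⟨List.replicate (a+b).toNat 1 ++ List.replicate a.toNat 2, ?_⟩
          rw [rep_sum γ hγ0 (a+b) a hcase2.2 hcase2.1 1]
          have e1 : γ ^ (-(((1:ℕ):ℤ))) = γ⁻¹ := by norm_num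
          have e2 : γ ^ (-(((1:ℕ):ℤ))+(-1)) = γ⁻¹ * γ⁻¹ := by
            rw [zpow_add₀ hne]; norm_num
          rw [show -(((1:ℕ):ℤ)+1) = -(((1:ℕ):ℤ)) + (-1) by ring, e1, e2, hiden]
          push_cast
          rw [div_eq_mul_inv]; ring
        · -- recursive case: pair (a+b, a) at one level deeper
          have hm : (a+b).natAbs + a.natAbs ≤ N := by
            -- case analysis
            rcases lt_or_ge a 0 with haneg | hapos
            · -- a < 0 ⇒ b > -a (from positivity)
              have hb' : (-a : ℝ) < b := by
                have h1 : (0:ℝ) ≤ a + b * (γ - 1) := by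
                  rw [div_eq_mul_inv, hinv] at hpos; linarith
                by_contra hc
                push_neg at hc
                have hbz : (b:ℝ) ≤ -a := hc
                have haR : (a:ℝ) < 0 := by exact_mod_cast haneg
                nlinarith [mul_nonneg (by linarith : (0:ℝ) ≤ -(a:ℝ) - b)
                    (by linarith : (0:ℝ) ≤ γ - 1),
                  mul_pos (by linarith : (0:ℝ) < -(a:ℝ)) (by linarith : (0:ℝ) < 2 - γ)]
              have hb2 : -a < b := by exact_mod_cast hb'
              omega
            · -- a ≥ 0; then b < 0 and a+b < 0 (else direct cases), a ≥ 1
              have hbneg : b < 0 := by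
                rcases lt_or_ge b 0 with h | h
                · exact h
                · exact absurd ⟨hapos, h⟩ hcase
              have habneg : a + b < 0 := by
                rcases lt_or_ge (a+b) 0 with h | h
                · exact h
                · exact absurd ⟨hapos, h⟩ hcase2
              have ha1 : 1 ≤ a := by
                rcases lt_or_ge 0 a with h | h
                · omega
                · -- a = 0, b < 0 ⇒ α < 0
                  have ha0 : a = 0 := le_antisymm h hapos
                  exfalso
                  have : (b:ℝ) / γ < 0 := div_neg_of_neg_of_pos (by exact_mod_cast hbneg) hγ0
                  rw [ha0] at hpos; push_cast at hpos; linarith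
              omega
          have hpos' : (0:ℝ) ≤ ((a:ℝ) + b) + a / γ := by
            have := hpos
            rw [hiden] at this
            have hinvpos : 0 < γ⁻¹ := inv_pos.mpr hγ0
            nlinarith
          have hpos'' : (0:ℝ) ≤ ((a+b : ℤ) : ℝ) + (a:ℝ) / γ := by push_cast; linarith
          obtain ⟨l, hl⟩ := ih (a+b) a hm hpos''
          refine ⟨l.map (fun i => i + 1), ?_⟩
          rw [shift_sum γ hne, ← hl, hiden]
          push_cast
          ring

theorem stmt_4 (γ : ℝ) (hγ : γ = (1 + Real.sqrt 5) / 2) :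
    ∀ α : ℝ, (∃ m n : ℤ, α = (m : ℝ) + (n : ℝ) / γ) → 0 ≤ α →
      ∃ (s : ℕ) (ι : Fin s → ℕ), Monotone ι ∧
        α = ∑ k : Fin s, γ ^ (-(ι k : ℤ)) := by
  rintro α ⟨m, n, rfl⟩ hpos
  obtain ⟨l, hl⟩ := key γ hγ (m.natAbs + n.natAbs) m n le_rfl hpos
  set L := l.mergeSort (· ≤ ·) with hL
  have hperm : L.Perm l := l.mergeSort_perm (· ≤ ·)
  have hsorted : L.Pairwise (· ≤ ·) := by
    have := List.pairwise_mergeSort (le := fun a b : ℕ => decide (a ≤ b)) (fun a b c h1 h2 => by simp at *; omega) (fun a b => by simp; omega) l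
    simpa using this
  refine ⟨L.length, L.get, List.sortedLE_iff_monotone_get.mp (List.sortedLE_iff_pairwise.mpr hsorted), ?_⟩
  have hsum : (L.map (fun i : ℕ => γ ^ (-(i : ℤ)))).sum
      = (l.map (fun i : ℕ => γ ^ (-(i : ℤ)))).sum :=
    (hperm.map _).sum_eq
  rw [hl, ← hsum]
  rw [← List.sum_ofFn (f := fun k : Fin L.length => γ ^ (-(L.get k : ℤ)))]
  conv_lhs => rw [← List.ofFn_get L]
  rw [List.map_ofFn]
  rfl
end

section
/- Let γ = (1+√5)/2. The sets E^(+) = {m + n/γ : m,n ≥ 1 integers} and E^(i) = {m·γ^(-i) + n·γ^(-i-2) : m ≥ 1, n ≥ 0 integers} for i ≥ 0 are pairwise disjoint, and their union is E* = {α ∈ ℤ[γ] : α > 0}. -/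
private def gstep (p : ℤ × ℤ) : ℤ × ℤ := (p.2, p.1 + p.2)

private def Pp (p : ℤ × ℤ) : Prop := 1 ≤ p.2 ∧ 1 ≤ p.1 + p.2

private lemma gstep_mul {γ : ℝ} (hγ2 : γ ^ 2 = γ + 1) (p : ℤ × ℤ) :
    γ * ((p.1 : ℝ) + (p.2 : ℝ) * γ) = ((gstep p).1 : ℝ) + ((gstep p).2 : ℝ) * γ := by
  simp only [gstep]
  push_cast
  linear_combination (p.2 : ℝ) * hγ2

private lemma gstep_iter_mul {γ : ℝ} (hγ2 : γ ^ 2 = γ + 1) :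
    ∀ (i : ℕ) (p : ℤ × ℤ), γ ^ i * ((p.1 : ℝ) + (p.2 : ℝ) * γ)
      = ((gstep^[i] p).1 : ℝ) + ((gstep^[i] p).2 : ℝ) * γ := by
  intro i
  induction i with
  | zero => intro p; simp
  | succ n ih =>
      intro p
      rw [Function.iterate_succ_apply, ← ih (gstep p), ← gstep_mul hγ2 p, pow_succ]
      ring

private lemma Pp_gstep {p : ℤ × ℤ} (h : Pp p) : Pp (gstep p) := by
  simp only [Pp, gstep] at h ⊢; omega

private lemma Pp_iter {p : ℤ × ℤ} (h : Pp p) : ∀ i, Pp (gstep^[i] p) := by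
  intro i
  induction i with
  | zero => simpa
  | succ n ih => rw [Function.iterate_succ_apply']; exact Pp_gstep ih

private lemma coeff_eq {γ : ℝ} (hirr : Irrational γ) {a b c d : ℤ}
    (h : (a : ℝ) + b * γ = c + d * γ) : a = c ∧ b = d := by
  by_cases hbd : b = d
  · subst hbd
    have : (a : ℝ) = c := by linarith
    exact ⟨by exact_mod_cast this, rfl⟩
  · exfalso
    have hbd' : ((b : ℝ) - d) ≠ 0 := by
      intro hc
      exact hbd (by exact_mod_cast sub_eq_zero.mp hc)
    have hγeq : γ = ((c - a : ℤ) : ℝ) / ((b - d : ℤ) : ℝ) := by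
      push_cast
      field_simp
      linarith
    exact (irrational_iff_ne_rational γ).mp hirr (c - a) (b - d) (sub_ne_zero.mpr hbd) hγeq

private lemma gstep_down {γ : ℝ} (hγ2 : γ ^ 2 = γ + 1) :
    ∀ (i : ℕ) (p : ℤ × ℤ), ∃ q : ℤ × ℤ,
      ((p.1 : ℝ) + (p.2 : ℝ) * γ) = γ ^ i * ((q.1 : ℝ) + (q.2 : ℝ) * γ) := by
  intro i
  induction i with
  | zero => intro p; exact ⟨p, by simp⟩
  | succ n ih =>
      intro p
      obtain ⟨q, hq⟩ := ih (p.2 - p.1, p.1)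
      refine ⟨q, ?_⟩
      have h1 : γ * (((p.2 - p.1 : ℤ) : ℝ) + ((p.1 : ℤ) : ℝ) * γ)
          = (p.1 : ℝ) + (p.2 : ℝ) * γ := by
        have h := gstep_mul hγ2 (p.2 - p.1, p.1)
        simpa [gstep] using h
      calc (p.1 : ℝ) + (p.2 : ℝ) * γ
          = γ * (((p.2 - p.1 : ℤ) : ℝ) + ((p.1 : ℤ) : ℝ) * γ) := h1.symm
        _ = γ * (γ ^ n * ((q.1 : ℝ) + (q.2 : ℝ) * γ)) := by rw [hq]
        _ = γ ^ (n + 1) * ((q.1 : ℝ) + (q.2 : ℝ) * γ) := by ring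

private lemma exists_Pp {γ : ℝ} (hγ2 : γ ^ 2 = γ + 1) (hγ1 : 1 < γ) (p : ℤ × ℤ)
    (hx : 0 < (p.1 : ℝ) + (p.2 : ℝ) * γ) : ∃ i, Pp (gstep^[i] p) := by
  by_contra hcon
  push_neg at hcon
  have hγ0 : (0 : ℝ) < γ := by linarith
  have hpos : ∀ i, 0 < ((gstep^[i] p).1 : ℝ) + ((gstep^[i] p).2 : ℝ) * γ := by
    intro i
    rw [← gstep_iter_mul hγ2]
    exact mul_pos (pow_pos hγ0 i) hx
  have key : ∀ i, (gstep^[i] p).2 ≤ 0 → 1 ≤ (gstep^[i] p).1 + (gstep^[i] p).2 := by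
    intro i hb
    have h1 := hpos i
    set q := gstep^[i] p with hq
    have hb2 : ((q.2 : ℝ)) ≤ 0 := by exact_mod_cast hb
    have hbR : (q.2 : ℝ) * γ ≤ (q.2 : ℝ) := by nlinarith
    have h2 : (0 : ℝ) < ((q.1 + q.2 : ℤ) : ℝ) := by push_cast; linarith
    have h3 : (0 : ℤ) < q.1 + q.2 := by exact_mod_cast h2
    omega
  obtain ⟨i0, hb0⟩ : ∃ i, (gstep^[i] p).2 ≤ 0 := by
    by_cases hb : p.2 ≤ 0
    · exact ⟨0, by simpa⟩
    · refine ⟨1, ?_⟩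
      have h0 := hcon 0
      simp only [Function.iterate_zero, id_eq, Pp, not_and, not_le] at h0
      have h1 : gstep^[1] p = gstep p := rfl
      rw [h1]
      simp only [gstep]
      omega
  have grow : ∀ k : ℕ, ∃ i, (gstep^[i] p).2 ≤ 0 ∧ (gstep^[i0] p).2 + k ≤ (gstep^[i] p).2 := by
    intro k
    induction k with
    | zero => exact ⟨i0, hb0, by omega⟩
    | succ n ih =>
        obtain ⟨i, hbi, hgi⟩ := ih
        have h1 := key i hbi
        have h2 := hcon (i + 1)
        have e1 : gstep^[i + 1] p = gstep (gstep^[i] p) := Function.iterate_succ_apply' _ _ _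
        have e2 : gstep^[i + 2] p = gstep (gstep^[i + 1] p) := Function.iterate_succ_apply' _ _ _
        rw [e1] at h2
        simp only [Pp, gstep, not_and, not_le] at h2
        refine ⟨i + 2, ?_, ?_⟩
        · rw [e2, e1]
          simp only [gstep]
          omega
        · rw [e2, e1]
          simp only [gstep]
          omega
  obtain ⟨i, hbi, hgi⟩ := grow (1 - (gstep^[i0] p).2).toNat
  omega

theorem stmt_5 (γ : ℝ) (hγ : γ = (1 + Real.sqrt 5) / 2)
    (Eplus : Set ℝ)
    (hEplus : Eplus = {x : ℝ | ∃ m n : ℤ, 1 ≤ m ∧ 1 ≤ n ∧ x = (m : ℝ) + (n : ℝ) / γ})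
    (Ei : ℕ → Set ℝ)
    (hEi : ∀ i : ℕ, Ei i = {x : ℝ | ∃ m n : ℤ,
      1 ≤ m ∧ 0 ≤ n ∧ x = (m : ℝ) * γ ^ (-(i : ℤ)) + (n : ℝ) * γ ^ (-(i : ℤ) - 2)})
    (Estar : Set ℝ)
    (hEstar : Estar = {x : ℝ | (∃ m n : ℤ, x = (m : ℝ) + (n : ℝ) / γ) ∧ 0 < x}) :
    (∀ i : ℕ, Disjoint Eplus (Ei i)) ∧
    (∀ i j : ℕ, i ≠ j → Disjoint (Ei i) (Ei j)) ∧
    (Eplus ∪ ⋃ i : ℕ, Ei i) = Estar := by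
  classical
  have h5 : Real.sqrt 5 ^ 2 = 5 := Real.sq_sqrt (by norm_num)
  have h5' : (2 : ℝ) < Real.sqrt 5 := by nlinarith [Real.sqrt_nonneg 5]
  have h5'' : Real.sqrt 5 < 3 := by nlinarith [Real.sqrt_nonneg 5]
  have hγ1 : 1 < γ := by rw [hγ]; linarith
  have hγlt2 : γ < 2 := by rw [hγ]; linarith
  have hγ0 : 0 < γ := lt_trans one_pos hγ1
  have hne : γ ≠ 0 := ne_of_gt hγ0
  have hγ2 : γ ^ 2 = γ + 1 := by rw [hγ]; nlinarith
  have hirr : Irrational γ := by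
    have h5irr : Irrational (Real.sqrt 5) := by
      have h := (by norm_num : Nat.Prime 5).irrational_sqrt
      simpa using h
    rw [hγ]
    have h1 : Irrational (1 + Real.sqrt 5) := by
      have := h5irr.ratCast_add (q := 1)
      simpa using this
    have h2 := h1.ratCast_mul (q := (2 : ℚ)⁻¹) (by norm_num)
    have h3 : (((2 : ℚ)⁻¹ : ℚ) : ℝ) = (2 : ℝ)⁻¹ := by norm_num
    rwa [h3, inv_mul_eq_div] at h2
  have hinv : γ⁻¹ = γ - 1 := inv_eq_of_mul_eq_one_right (by linear_combination hγ2)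
  have hg2inv : (γ ^ 2)⁻¹ = 2 - γ :=
    inv_eq_of_mul_eq_one_right (by linear_combination (1 - γ) * hγ2)
  have hzpow1 : ∀ i : ℕ, γ ^ (-(i : ℤ)) = (γ ^ i)⁻¹ := by
    intro i; rw [zpow_neg, zpow_natCast]
  have hzpow2 : ∀ i : ℕ, γ ^ (-(i : ℤ) - 2) = (γ ^ i)⁻¹ * (2 - γ) := by
    intro i
    rw [zpow_sub₀ hne, hzpow1, div_eq_mul_inv]
    congr 1
  -- membership characterizations
  have memEplus : ∀ x : ℝ, x ∈ Eplus ↔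
      ∃ p : ℤ × ℤ, Pp p ∧ x = (p.1 : ℝ) + (p.2 : ℝ) * γ := by
    intro x
    rw [hEplus]
    constructor
    · rintro ⟨m, n, hm, hn, rfl⟩
      refine ⟨(m - n, n), ⟨hn, by omega⟩, ?_⟩
      rw [div_eq_mul_inv, hinv]
      push_cast
      ring
    · rintro ⟨⟨a, b⟩, ⟨h1, h2⟩, rfl⟩
      refine ⟨a + b, b, by omega, h1, ?_⟩
      rw [div_eq_mul_inv, hinv]
      push_cast
      ring
  have memEi : ∀ (i : ℕ) (x : ℝ), x ∈ Ei i ↔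
      ∃ p : ℤ × ℤ, p.2 ≤ 0 ∧ 1 ≤ p.1 + 2 * p.2 ∧ γ ^ i * x = (p.1 : ℝ) + (p.2 : ℝ) * γ := by
    intro i x
    have hp : γ ^ i ≠ 0 := pow_ne_zero _ hne
    rw [hEi i]
    constructor
    · rintro ⟨m, n, hm, hn, rfl⟩
      refine ⟨(m + 2 * n, -n), show -n ≤ 0 by omega,
        show 1 ≤ (m + 2 * n) + 2 * (-n) by omega, ?_⟩
      rw [hzpow1, hzpow2]
      push_cast
      field_simp
      ring
    · rintro ⟨⟨a, b⟩, hb, hab, hx⟩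
      refine ⟨a + 2 * b, -b, by omega, by omega, ?_⟩
      have hx' : x = (γ ^ i)⁻¹ * ((a : ℝ) + (b : ℝ) * γ) := by
        rw [← hx]
        field_simp
      rw [hzpow1, hzpow2, hx']
      push_cast
      ring
  have memEstar : ∀ x : ℝ, x ∈ Estar ↔
      (∃ p : ℤ × ℤ, x = (p.1 : ℝ) + (p.2 : ℝ) * γ) ∧ 0 < x := by
    intro x
    rw [hEstar]
    constructor
    · rintro ⟨⟨m, n, rfl⟩, hx⟩
      refine ⟨⟨(m - n, n), ?_⟩, hx⟩
      rw [div_eq_mul_inv, hinv]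
      push_cast
      ring
    · rintro ⟨⟨⟨a, b⟩, rfl⟩, hx⟩
      refine ⟨⟨a + b, b, ?_⟩, hx⟩
      rw [div_eq_mul_inv, hinv]
      push_cast
      ring
  have Pp_pos : ∀ p : ℤ × ℤ, Pp p → 0 < (p.1 : ℝ) + (p.2 : ℝ) * γ := by
    rintro ⟨a, b⟩ ⟨h1, h2⟩
    have hb : (1 : ℝ) ≤ (b : ℝ) := by exact_mod_cast h1
    have hab : (1 : ℝ) ≤ (a : ℝ) + (b : ℝ) := by
      have : (1 : ℝ) ≤ ((a + b : ℤ) : ℝ) := by exact_mod_cast h2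
      push_cast at this
      linarith
    nlinarith
  -- disjointness of Eplus and Ei i
  have disj1 : ∀ i : ℕ, Disjoint Eplus (Ei i) := by
    intro i
    rw [Set.disjoint_left]
    intro x hxp hxi
    obtain ⟨p, hPp, rfl⟩ := (memEplus x).mp hxp
    obtain ⟨q, hq2, hq12, hq⟩ := (memEi i _).mp hxi
    rw [gstep_iter_mul hγ2 i p] at hq
    obtain ⟨-, h2⟩ := coeff_eq hirr hq
    have := (Pp_iter hPp i).1
    omega
  -- Ei membership pushed one step becomes Pp
  have EiPp : ∀ (i : ℕ) (x : ℝ), x ∈ Ei i →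
      ∃ r : ℤ × ℤ, Pp r ∧ γ ^ (i + 1) * x = (r.1 : ℝ) + (r.2 : ℝ) * γ := by
    intro i x hx
    obtain ⟨q, hq2, hq12, hq⟩ := (memEi i x).mp hx
    refine ⟨gstep q, ?_, ?_⟩
    · simp only [Pp, gstep]; omega
    · have h : γ ^ (i + 1) * x = γ * (γ ^ i * x) := by ring
      rw [h, hq, gstep_mul hγ2 q]
  have disj2' : ∀ i j : ℕ, i < j → Disjoint (Ei i) (Ei j) := by
    intro i j hij
    rw [Set.disjoint_left]
    intro x hxi hxj
    obtain ⟨r, hPr, hr⟩ := EiPp i x hxi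
    obtain ⟨q, hq2, hq12, hq⟩ := (memEi j x).mp hxj
    obtain ⟨k, rfl⟩ : ∃ k, j = k + (i + 1) := ⟨j - (i + 1), by omega⟩
    have h2 : γ ^ (k + (i + 1)) * x
        = ((gstep^[k] r).1 : ℝ) + ((gstep^[k] r).2 : ℝ) * γ := by
      rw [pow_add, mul_assoc, hr, gstep_iter_mul hγ2 k r]
    obtain ⟨-, hb⟩ := coeff_eq hirr (h2.symm.trans hq)
    have := (Pp_iter hPr k).1
    omega
  have disj2 : ∀ i j : ℕ, i ≠ j → Disjoint (Ei i) (Ei j) := by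
    intro i j hij
    rcases lt_or_gt_of_ne hij with h | h
    · exact disj2' i j h
    · exact (disj2' j i h).symm
  refine ⟨disj1, disj2, ?_⟩
  ext x
  simp only [Set.mem_union, Set.mem_iUnion]
  constructor
  · rintro (hx | ⟨i, hx⟩)
    · obtain ⟨p, hPp, rfl⟩ := (memEplus x).mp hx
      exact (memEstar _).mpr ⟨⟨p, rfl⟩, Pp_pos p hPp⟩
    · obtain ⟨q, hq2, hq12, hq⟩ := (memEi i x).mp hx
      -- positivity of q-coordinates
      have hqpos : (0 : ℝ) < (q.1 : ℝ) + (q.2 : ℝ) * γ := by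
        have hb : (q.2 : ℝ) ≤ 0 := by exact_mod_cast hq2
        have ha : (1 : ℝ) ≤ (q.1 : ℝ) + 2 * (q.2 : ℝ) := by
          have : (1 : ℝ) ≤ ((q.1 + 2 * q.2 : ℤ) : ℝ) := by exact_mod_cast hq12
          push_cast at this
          linarith
        nlinarith
      have hgp : (0 : ℝ) < γ ^ i := pow_pos hγ0 i
      have hxpos : 0 < x := by
        by_contra hle
        push_neg at hle
        have : γ ^ i * x ≤ 0 := mul_nonpos_of_nonneg_of_nonpos (le_of_lt hgp) hle
        rw [hq] at this
        linarith
      obtain ⟨r, hr⟩ := gstep_down hγ2 i q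
      have hxr : x = (r.1 : ℝ) + (r.2 : ℝ) * γ := by
        have h := hq.trans hr
        exact mul_left_cancel₀ (ne_of_gt hgp) h
      exact (memEstar _).mpr ⟨⟨r, hxr⟩, hxpos⟩
  · intro hx
    obtain ⟨⟨p, rfl⟩, hxpos⟩ := (memEstar x).mp hx
    have hex : ∃ i, Pp (gstep^[i] p) := exists_Pp hγ2 hγ1 p hxpos
    rcases Nat.eq_zero_or_pos (Nat.find hex) with hk0 | hkpos
    · left
      have h := Nat.find_spec hex
      rw [hk0] at h
      exact (memEplus _).mpr ⟨p, by simpa using h, rfl⟩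
    · right
      obtain ⟨j, hj⟩ : ∃ j, Nat.find hex = j + 1 := ⟨Nat.find hex - 1, by omega⟩
      have hfind := Nat.find_spec hex
      rw [hj, Function.iterate_succ_apply'] at hfind
      have hmin : ¬ Pp (gstep^[j] p) := Nat.find_min hex (by omega)
      refine ⟨j, (memEi j _).mpr ⟨gstep^[j] p, ?_, ?_, gstep_iter_mul hγ2 j p⟩⟩
      · simp only [Pp, gstep, not_and, not_le] at hfind hmin
        omega
      · simp only [Pp, gstep, not_and, not_le] at hfind hmin
        omega
end

section
/- Let γ = (1+√5)/2 and let α = m + n/γ with m,n ∈ ℤ, α > 0. If α = γ^(-i₁) + ⋯ + γ^(-iₛ) with integers 0 ≤ i₁ ≤ ⋯ ≤ iₛ, then Σₖ f(iₖ) ≥ |m| + |n|, with equality if iₛ ≤ 1 or if all iₖ have the same parity. -/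
private def auxA : ℕ → ℤ
  | 0 => 1
  | 1 => 0
  | (n+2) => auxA (n+1) + auxA n

private def auxB : ℕ → ℤ
  | 0 => 0
  | 1 => 1
  | (n+2) => auxB (n+1) + auxB n

private lemma auxA_nonneg : ∀ n, 0 ≤ auxA n := by
  intro n
  induction n using Nat.strong_induction_on with
  | _ n ih =>
    match n with
    | 0 => simp [auxA]
    | 1 => simp [auxA]
    | (k+2) =>
      have h1 := ih (k+1) (by omega)
      have h2 := ih k (by omega)
      show 0 ≤ auxA (k+1) + auxA k
      omega

private lemma auxB_nonneg : ∀ n, 0 ≤ auxB n := by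
  intro n
  induction n using Nat.strong_induction_on with
  | _ n ih =>
    match n with
    | 0 => simp [auxB]
    | 1 => simp [auxB]
    | (k+2) =>
      have h1 := ih (k+1) (by omega)
      have h2 := ih k (by omega)
      show 0 ≤ auxB (k+1) + auxB k
      omega

private lemma f_eq_aux (f : ℤ → ℤ) (hf0 : f 0 = 1) (hf1 : f 1 = 1)
    (hrec : ∀ i : ℤ, f (i + 2) = f (i + 1) + f i) :
    ∀ n : ℕ, f n = auxA n + auxB n := by
  intro n
  induction n using Nat.strong_induction_on with
  | _ n ih =>
    match n with
    | 0 => simpa [auxA, auxB] using hf0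
    | 1 => simpa [auxA, auxB] using hf1
    | (k+2) =>
      have h1 := ih (k+1) (by omega)
      have h2 := ih k (by omega)
      have e1 : ((k+2:ℕ):ℤ) = (k:ℤ) + 2 := by push_cast; ring
      have e2 : ((k+1:ℕ):ℤ) = (k:ℤ) + 1 := by push_cast; ring
      rw [e1, hrec, ← e2, h1, h2]
      show _ = auxA (k+1) + auxA k + (auxB (k+1) + auxB k)
      ring

private lemma pow_eq_aux (γ : ℝ) (hγ0 : γ ≠ 0) (hγ2 : γ^2 = γ + 1) :
    ∀ n : ℕ, γ ^ (-(n:ℤ)) =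
      (((-1)^n * auxA n : ℤ) : ℝ) + (((-1)^(n+1) * auxB n : ℤ) : ℝ) / γ := by
  intro n
  induction n using Nat.strong_induction_on with
  | _ n ih =>
    match n with
    | 0 => simp [auxA, auxB]
    | 1 =>
      simp [auxA, auxB]
    | (k+2) =>
      have h1 := ih k (by omega)
      have h2 := ih (k+1) (by omega)
      have key : γ ^ (-((k:ℤ)+2)) = γ ^ (-(k:ℤ)) - γ ^ (-((k:ℤ)+1)) := by
        have e1 : γ ^ (-((k:ℤ)+2)) * γ^2 = γ ^ (-(k:ℤ)) := by
          rw [← zpow_natCast γ 2, ← zpow_add₀ hγ0]; norm_num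
        have e2 : γ ^ (-((k:ℤ)+2)) * γ = γ ^ (-((k:ℤ)+1)) := by
          have h := zpow_add₀ hγ0 (-((k:ℤ)+2)) 1
          rw [zpow_one] at h
          rw [← h]; ring_nf
        linear_combination e1 - e2 - γ ^ (-((k:ℤ)+2)) * hγ2
      have ec : (-((k+2:ℕ):ℤ)) = -((k:ℤ)+2) := by push_cast; ring
      have ec2 : (-((k+1:ℕ):ℤ)) = -((k:ℤ)+1) := by push_cast; ring
      rw [ec2] at h2
      rw [ec, key, h1, h2]
      show _ = (((-1)^(k+2) * (auxA (k+1) + auxA k) : ℤ) : ℝ) +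
        (((-1)^(k+3) * (auxB (k+1) + auxB k) : ℤ) : ℝ) / γ
      push_cast
      field_simp
      ring

theorem stmt_6 (f : ℤ → ℤ) (hf0 : f 0 = 1) (hf1 : f 1 = 1)
    (hrec : ∀ i : ℤ, f (i + 2) = f (i + 1) + f i)
    (γ : ℝ) (hγ : γ = (1 + Real.sqrt 5) / 2)
    (m n : ℤ) (hpos : 0 < (m : ℝ) + (n : ℝ) / γ)
    (s : ℕ) (ι : Fin s → ℕ) (hmono : Monotone ι)
    (hrep : (m : ℝ) + (n : ℝ) / γ = ∑ k : Fin s, γ ^ (-(ι k : ℤ))) :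
    |m| + |n| ≤ ∑ k : Fin s, f (ι k) ∧
    ((∀ k, ι k ≤ 1) ∨ (∀ k l, (ι k : ℤ) % 2 = (ι l : ℤ) % 2) →
      ∑ k : Fin s, f (ι k) = |m| + |n|) := by
  have h5 : Real.sqrt 5 ^ 2 = 5 := Real.sq_sqrt (by norm_num)
  have hγpos : 0 < γ := by
    rw [hγ]; positivity
  have hγ0 : γ ≠ 0 := ne_of_gt hγpos
  have hγ2 : γ ^ 2 = γ + 1 := by
    rw [hγ]; field_simp; nlinarith [h5]
  have hirr : Irrational (Real.sqrt 5) := by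
    simpa using (Nat.Prime.irrational_sqrt (p := 5) (by norm_num))
  -- integer coordinates of the right-hand side
  set M : ℤ := ∑ k : Fin s, (-1)^(ι k) * auxA (ι k) with hMdef
  set N : ℤ := ∑ k : Fin s, (-1)^(ι k + 1) * auxB (ι k) with hNdef
  have hsum : (m:ℝ) + (n:ℝ)/γ = (M:ℝ) + (N:ℝ)/γ := by
    rw [hrep]
    calc ∑ k : Fin s, γ ^ (-(ι k : ℤ))
        = ∑ k : Fin s, ((((-1)^(ι k) * auxA (ι k) : ℤ):ℝ)
            + (((-1)^(ι k + 1) * auxB (ι k) : ℤ):ℝ)/γ) :=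
          Finset.sum_congr rfl (fun k _ => pow_eq_aux γ hγ0 hγ2 (ι k))
      _ = (M:ℝ) + (N:ℝ)/γ := by
          rw [Finset.sum_add_distrib, ← Finset.sum_div, hMdef, hNdef]
          push_cast
          ring
  have hmul : ((m - M : ℤ):ℝ) * γ = ((N - n : ℤ):ℝ) := by
    push_cast
    field_simp at hsum
    linarith
  have hM : M = m := by
    by_contra hc
    have hmM : ((m - M : ℤ):ℝ) ≠ 0 := by
      simp only [ne_eq, Int.cast_eq_zero, sub_eq_zero]
      exact fun h => hc h.symm
    have hq : γ = ((((N - n : ℤ):ℚ) / ((m - M : ℤ):ℚ)):ℝ) := by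
      push_cast
      rw [eq_div_iff (by exact_mod_cast hmM)]
      push_cast at hmul ⊢
      linarith
    apply hirr
    refine ⟨2 * (((N - n : ℤ):ℚ) / ((m - M : ℤ):ℚ)) - 1, ?_⟩
    have hg : Real.sqrt 5 = 2*γ - 1 := by rw [hγ]; ring
    rw [hg, hq]; push_cast; ring
  have hN : N = n := by
    have h0 : ((N - n : ℤ):ℝ) = 0 := by
      rw [← hmul, hM]; simp
    have : (N - n : ℤ) = 0 := by exact_mod_cast h0
    omega
  -- sums of nonnegative integers
  have hSf : ∑ k : Fin s, f (ι k)
      = (∑ k : Fin s, auxA (ι k)) + ∑ k : Fin s, auxB (ι k) := by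
    rw [← Finset.sum_add_distrib]
    exact Finset.sum_congr rfl (fun k _ => f_eq_aux f hf0 hf1 hrec (ι k))
  have hSa : 0 ≤ ∑ k : Fin s, auxA (ι k) :=
    Finset.sum_nonneg (fun k _ => auxA_nonneg _)
  have hSb : 0 ≤ ∑ k : Fin s, auxB (ι k) :=
    Finset.sum_nonneg (fun k _ => auxB_nonneg _)
  have habsM : |M| ≤ ∑ k : Fin s, auxA (ι k) := by
    rw [hMdef]
    refine le_trans (Finset.abs_sum_le_sum_abs _ _) (le_of_eq ?_)
    refine Finset.sum_congr rfl (fun k _ => ?_)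
    rw [abs_mul, abs_pow, abs_neg, abs_one, one_pow, one_mul,
      abs_of_nonneg (auxA_nonneg _)]
  have habsN : |N| ≤ ∑ k : Fin s, auxB (ι k) := by
    rw [hNdef]
    refine le_trans (Finset.abs_sum_le_sum_abs _ _) (le_of_eq ?_)
    refine Finset.sum_congr rfl (fun k _ => ?_)
    rw [abs_mul, abs_pow, abs_neg, abs_one, one_pow, one_mul,
      abs_of_nonneg (auxB_nonneg _)]
  constructor
  · rw [hSf, ← hM, ← hN]; omega
  · intro hcase
    rw [hSf, ← hM, ← hN]
    rcases hcase with h1 | h2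
    · have hMa : M = ∑ k : Fin s, auxA (ι k) := by
        refine Finset.sum_congr rfl (fun k _ => ?_)
        rcases Nat.le_one_iff_eq_zero_or_eq_one.mp (h1 k) with h | h <;>
          simp [h, auxA]
      have hNb : N = ∑ k : Fin s, auxB (ι k) := by
        refine Finset.sum_congr rfl (fun k _ => ?_)
        rcases Nat.le_one_iff_eq_zero_or_eq_one.mp (h1 k) with h | h <;>
          simp [h, auxB]
      rw [hMa, hNb, abs_of_nonneg hSa, abs_of_nonneg hSb]
    · rcases Nat.eq_zero_or_pos s with hs | hs
      · subst hs
        simp [hMdef, hNdef]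
      · set k0 : Fin s := ⟨0, hs⟩
        rcases Nat.even_or_odd (ι k0) with he | ho
        · have hall : ∀ k : Fin s, Even (ι k) := by
            intro k
            have hp := h2 k k0
            have h0 := Nat.even_iff.mp he
            rw [Nat.even_iff]
            omega
          have hMa : M = ∑ k : Fin s, auxA (ι k) := by
            refine Finset.sum_congr rfl (fun k _ => ?_)
            rw [(hall k).neg_one_pow, one_mul]
          have hNb : N = -∑ k : Fin s, auxB (ι k) := by
            rw [← Finset.sum_neg_distrib]
            refine Finset.sum_congr rfl (fun k _ => ?_)
            rw [pow_succ, (hall k).neg_one_pow, one_mul]; ring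
          rw [hMa, hNb, abs_of_nonneg hSa, abs_neg, abs_of_nonneg hSb]
        · have hall : ∀ k : Fin s, Odd (ι k) := by
            intro k
            have hp := h2 k k0
            have h0 := Nat.odd_iff.mp ho
            rw [Nat.odd_iff]
            omega
          have hMa : M = -∑ k : Fin s, auxA (ι k) := by
            rw [← Finset.sum_neg_distrib]
            refine Finset.sum_congr rfl (fun k _ => ?_)
            rw [(hall k).neg_one_pow]; ring
          have hNb : N = ∑ k : Fin s, auxB (ι k) := by
            refine Finset.sum_congr rfl (fun k _ => ?_)
            rw [pow_succ, (hall k).neg_one_pow]; ring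
          rw [hMa, hNb, abs_neg, abs_of_nonneg hSa, abs_of_nonneg hSb, add_comm]
end

section
/- Let γ = (1+√5)/2 and let α = m + n/γ with m,n ∈ ℤ, α > 0. If α = γ^(-i₁) + ⋯ + γ^(-iₛ) with 0 ≤ i₁ ≤ ⋯ ≤ iₛ, then Σₖ f(iₖ−2) ≥ |m| and Σₖ f(iₖ−1) ≥ |n|. -/
theorem stmt_7 (f : ℤ → ℤ) (hf0 : f 0 = 1) (hf1 : f 1 = 1)
    (hrec : ∀ i : ℤ, f (i + 2) = f (i + 1) + f i)
    (γ : ℝ) (hγ : γ = (1 + Real.sqrt 5) / 2)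
    (m n : ℤ) (hpos : 0 < (m : ℝ) + (n : ℝ) / γ)
    (s : ℕ) (ι : Fin s → ℕ) (hmono : Monotone ι)
    (hrep : (m : ℝ) + (n : ℝ) / γ = ∑ k : Fin s, γ ^ (-(ι k : ℤ))) :
    |m| ≤ ∑ k : Fin s, f ((ι k : ℤ) - 2) ∧ |n| ≤ ∑ k : Fin s, f ((ι k : ℤ) - 1) := by
  have h5 : Real.sqrt 5 ^ 2 = 5 := Real.sq_sqrt (by norm_num)
  have h5pos : (0:ℝ) < Real.sqrt 5 := Real.sqrt_pos.mpr (by norm_num)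
  have hγpos : 0 < γ := by rw [hγ]; linarith
  have hγne : γ ≠ 0 := ne_of_gt hγpos
  have hginv : γ⁻¹ = γ - 1 := by
    refine inv_eq_of_mul_eq_one_right ?_
    rw [hγ]; nlinarith [h5]
  set x : ℝ := γ⁻¹ with hx
  have hx2 : x ^ 2 = 1 - x := by
    rw [hginv, hγ]; nlinarith [h5]
  have hxirr : Irrational x := by
    have hxe : x = (Real.sqrt 5 - 1) / 2 := by
      rw [hginv, hγ]; ring
    rw [hxe]
    have h1 : Irrational (Real.sqrt 5 - (1:ℤ)) := Nat.prime_five.irrational_sqrt.sub_intCast 1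
    have := h1.div_intCast (m := 2) (by norm_num)
    simpa using this
  -- values of f at negative arguments
  have hfm1 : f (-1) = 0 := by have := hrec (-1); norm_num at this; omega
  have hfm2 : f (-2) = 1 := by have := hrec (-2); norm_num at this; omega
  -- nonnegativity
  have hnn : ∀ i : ℕ, 0 ≤ f ((i:ℤ) - 2) ∧ 0 ≤ f ((i:ℤ) - 1) := by
    intro i
    induction i with
    | zero => norm_num [hfm2, hfm1]
    | succ k ih =>
      have h := hrec ((k:ℤ) - 2)
      have e1 : (k:ℤ) - 2 + 2 = ((k+1:ℕ):ℤ) - 1 := by push_cast; ring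
      have e2 : (k:ℤ) - 2 + 1 = (k:ℤ) - 1 := by ring
      have e3 : ((k+1:ℕ):ℤ) - 2 = (k:ℤ) - 1 := by push_cast; ring
      rw [e1, e2] at h
      refine ⟨by rw [e3]; exact ih.2, by rw [h]; exact add_nonneg ih.2 ih.1⟩
  -- key representation
  have key : ∀ i : ℕ, x ^ i =
      (((-1:ℤ)^i * f ((i:ℤ) - 2) : ℤ) : ℝ) + (((-1:ℤ)^(i+1) * f ((i:ℤ) - 1) : ℤ) : ℝ) * x := by
    intro i
    induction i using Nat.strong_induction_on with
    | _ i ih =>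
      match i with
      | 0 => simp [hfm2, hfm1]
      | 1 => simp [hfm1, hf0]
      | (k+2) =>
        have h0 := ih k (by omega)
        have h1 := ih (k+1) (by omega)
        have hstep : x ^ (k+2) = x ^ k - x ^ (k+1) := by
          have : x ^ (k+2) = x ^ k * x ^ 2 := by ring
          rw [this, hx2]; ring
        rw [hstep, h0, h1]
        have r1 : f ((k:ℤ)) = f ((k:ℤ) - 1) + f ((k:ℤ) - 2) := by
          have := hrec ((k:ℤ) - 2)
          rw [show (k:ℤ) - 2 + 2 = (k:ℤ) by ring,
            show (k:ℤ) - 2 + 1 = (k:ℤ) - 1 by ring] at this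
          exact this
        have r2 : f ((k:ℤ) + 1) = f ((k:ℤ)) + f ((k:ℤ) - 1) := by
          have := hrec ((k:ℤ) - 1)
          rw [show (k:ℤ) - 1 + 2 = (k:ℤ) + 1 by ring,
            show (k:ℤ) - 1 + 1 = (k:ℤ) by ring] at this
          exact this
        push_cast [show (k:ℤ) + 2 - 2 = (k:ℤ) by ring, show (k:ℤ) + 2 - 1 = (k:ℤ) + 1 by ring,
          show (k:ℤ) + 1 - 2 = (k:ℤ) - 1 by ring, show (k:ℤ) + 1 - 1 = (k:ℤ) by ring, r2, r1]
        ring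
  -- rewrite the sum
  have hzpow : ∀ k : Fin s, γ ^ (-(ι k : ℤ)) = x ^ (ι k) := by
    intro k
    rw [zpow_neg, zpow_natCast, ← inv_pow, ← hx]
  set A : ℤ := ∑ k : Fin s, (-1:ℤ)^(ι k) * f ((ι k : ℤ) - 2) with hA
  set B : ℤ := ∑ k : Fin s, (-1:ℤ)^(ι k + 1) * f ((ι k : ℤ) - 1) with hB
  have hsum : (m : ℝ) + (n : ℝ) * x = (A : ℝ) + (B : ℝ) * x := by
    have : (m : ℝ) + (n : ℝ) / γ = ∑ k : Fin s, ((((-1:ℤ)^(ι k) * f ((ι k : ℤ) - 2) : ℤ) : ℝ)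
        + (((-1:ℤ)^(ι k + 1) * f ((ι k : ℤ) - 1) : ℤ) : ℝ) * x) := by
      rw [hrep]
      exact Finset.sum_congr rfl fun k _ => by rw [hzpow k, key (ι k)]
    rw [Finset.sum_add_distrib, ← Finset.sum_mul, ← Int.cast_sum, ← Int.cast_sum] at this
    rw [← this, div_eq_mul_inv, hx]
  -- linear independence over ℚ
  have hBn : B = n := by
    by_contra hne
    have hx_eq : ((n : ℝ) - B) * x = (A : ℝ) - m := by linarith
    have : x = ((A - m : ℤ) : ℝ) / ((n - B : ℤ) : ℝ) := by
      rw [eq_div_iff (Int.cast_ne_zero.mpr (by omega : (n - B : ℤ) ≠ 0))]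
      push_cast
      linarith [hx_eq]
    rw [this] at hxirr
    have : Irrational (((A - m : ℤ) / (n - B : ℤ) : ℚ) : ℝ) := by
      convert hxirr using 2
      push_cast
      ring
    exact (Rat.not_irrational _) this
  have hAm : A = m := by
    have : (m : ℝ) = (A : ℝ) := by rw [hBn] at hsum; linarith
    exact_mod_cast this.symm
  constructor
  · calc |m| = |A| := by rw [hAm]
      _ ≤ ∑ k : Fin s, |(-1:ℤ)^(ι k) * f ((ι k : ℤ) - 2)| := Finset.abs_sum_le_sum_abs _ _
      _ = ∑ k : Fin s, f ((ι k : ℤ) - 2) := by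
          refine Finset.sum_congr rfl fun k _ => ?_
          rw [abs_mul, abs_pow, abs_neg, abs_one, one_pow, one_mul,
            abs_of_nonneg (hnn (ι k)).1]
  · calc |n| = |B| := by rw [hBn]
      _ ≤ ∑ k : Fin s, |(-1:ℤ)^(ι k + 1) * f ((ι k : ℤ) - 1)| := Finset.abs_sum_le_sum_abs _ _
      _ = ∑ k : Fin s, f ((ι k : ℤ) - 1) := by
          refine Finset.sum_congr rfl fun k _ => ?_
          rw [abs_mul, abs_pow, abs_neg, abs_one, one_pow, one_mul,
            abs_of_nonneg (hnn (ι k)).2]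
end
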